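/- All eigenvalues of A·Q₃⁺⁻¹ and of Q₄⁺⁻¹·A equal 1; moreover (𝒜 (Q₃⁺)⁻¹ − I)³ = 0 and ((Q₄⁺)⁻¹ 𝒜 − I)² = 0, so GMRES preconditioned by Q₃⁺ (resp. Q₄⁺) converges in at most three (resp. two) iterations. -/

import Mathlib

open Matrix Complex

/-- A 3×3 block matrix with blocks of sizes n, m, l. -/
def blk3 {n m l : ℕ}
    (M11 : Matrix (Fin n) (Fin n) ℝ) (M12 : Matrix (Fin n) (Fin m) ℝ) (M13 : Matrix (Fin n) (Fin l) ℝ)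
    (M21 : Matrix (Fin m) (Fin n) ℝ) (M22 : Matrix (Fin m) (Fin m) ℝ) (M23 : Matrix (Fin m) (Fin l) ℝ)
    (M31 : Matrix (Fin l) (Fin n) ℝ) (M32 : Matrix (Fin l) (Fin m) ℝ) (M33 : Matrix (Fin l) (Fin l) ℝ) :
    Matrix (Fin n ⊕ (Fin m ⊕ Fin l)) (Fin n ⊕ (Fin m ⊕ Fin l)) ℝ :=
  Matrix.fromBlocks M11
    (Matrix.of fun i j => Sum.elim (M12 i) (M13 i) j)
    (Matrix.of fun i j => Sum.elim (fun k => M21 k j) (fun k => M31 k j) i)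
    (Matrix.fromBlocks M22 M23 M32 M33)

section Aux

variable {n m l : ℕ}

lemma blk3_one : blk3 (1 : Matrix (Fin n) (Fin n) ℝ) 0 0 0 (1 : Matrix (Fin m) (Fin m) ℝ) 0 0 0
    (1 : Matrix (Fin l) (Fin l) ℝ) = 1 := by
  ext (i|i|i) (j|j|j) <;> simp [blk3, Matrix.one_apply, Matrix.fromBlocks]

lemma blk3_zero : blk3 (0 : Matrix (Fin n) (Fin n) ℝ) 0 0 0 (0 : Matrix (Fin m) (Fin m) ℝ) 0 0 0
    (0 : Matrix (Fin l) (Fin l) ℝ) = 0 := by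
  ext (i|i|i) (j|j|j) <;> simp [blk3, Matrix.fromBlocks]

lemma blk3_sub (a b c d e f g h i a' b' c' d' e' f' g' h' i') :
    blk3 (n := n) (m := m) (l := l) a b c d e f g h i - blk3 a' b' c' d' e' f' g' h' i' =
      blk3 (a - a') (b - b') (c - c') (d - d') (e - e') (f - f') (g - g') (h - h') (i - i') := by
  ext (x|x|x) (y|y|y) <;> simp [blk3, Matrix.fromBlocks]

lemma blk3_mul (a : Matrix (Fin n) (Fin n) ℝ) (b c d e f g h i a' b' c' d' e' f' g' h' i') :
    blk3 (n := n) (m := m) (l := l) a b c d e f g h i * blk3 a' b' c' d' e' f' g' h' i' =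
      blk3 (a * a' + b * d' + c * g') (a * b' + b * e' + c * h') (a * c' + b * f' + c * i')
           (d * a' + e * d' + f * g') (d * b' + e * e' + f * h') (d * c' + e * f' + f * i')
           (g * a' + h * d' + i * g') (g * b' + h * e' + i * h') (g * c' + h * f' + i * i') := by
  ext (x|x|x) (y|y|y) <;>
    (simp [blk3, Matrix.mul_apply, Matrix.fromBlocks, Fintype.sum_sum_type,
      Finset.sum_add_distrib]; ring)

/-- positive definiteness is preserved by conjugation with a full-row-rank matrix. -/
lemma posDef_conj {k n : ℕ} {M : Matrix (Fin n) (Fin n) ℝ} (hM : M.PosDef)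
    (B : Matrix (Fin k) (Fin n) ℝ) (hB : B.rank = k) : (B * M * Bᵀ).PosDef := by
  have hli : LinearIndependent ℝ (fun i => B i) := by
    rw [Matrix.rank_eq_finrank_span_row] at hB
    exact linearIndependent_iff_card_eq_finrank_span.mpr (by simp only [Set.finrank, Fintype.card_fin]; exact hB.symm)
  have hinj : Function.Injective B.vecMul := Matrix.vecMul_injective_iff.mpr hli
  refine Matrix.PosDef.of_dotProduct_mulVec_pos ?_ ?_
  · rw [Matrix.IsHermitian, Matrix.conjTranspose_eq_transpose_of_trivial,
      Matrix.transpose_mul, Matrix.transpose_mul, Matrix.transpose_transpose]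
    have hMs : Mᵀ = M := by
      rw [← Matrix.conjTranspose_eq_transpose_of_trivial]; exact hM.isHermitian
    rw [hMs, Matrix.mul_assoc]
  · intro x hx
    have hxB : Bᵀ *ᵥ x ≠ 0 := by
      rw [Matrix.mulVec_transpose]
      intro h
      exact hx (hinj (by simpa using h))
    have := hM.dotProduct_mulVec_pos hxB
    have hrw : star x ⬝ᵥ (B * M * Bᵀ) *ᵥ x = star (Bᵀ *ᵥ x) ⬝ᵥ M *ᵥ (Bᵀ *ᵥ x) := by
      simp only [← Matrix.mulVec_mulVec, star_trivial]
      rw [Matrix.dotProduct_mulVec x B, Matrix.mulVec_transpose]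
    rwa [hrw]

lemma nilpotent_spectrum {k : Type} [Fintype k] [DecidableEq k]
    (M : Matrix k k ℂ) (p : ℕ) (hp : (M - 1) ^ p = 0) :
    ∀ μ ∈ spectrum ℂ M, μ = 1 := by
  intro μ hμ
  have h := spectrum.subset_polynomial_aeval M ((Polynomial.X - Polynomial.C 1) ^ p)
    ⟨μ, hμ, rfl⟩
  simp only [map_pow, map_sub, Polynomial.aeval_X, Polynomial.aeval_C, _root_.map_one, hp,
    Polynomial.eval_pow, Polynomial.eval_sub, Polynomial.eval_X, Polynomial.eval_C,
    Polynomial.eval_one] at h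
  rw [spectrum.mem_iff, sub_zero] at h
  by_contra hne
  exact h (((isUnit_iff_ne_zero).mpr (pow_ne_zero _ (sub_ne_zero.mpr hne))).map
    (algebraMap ℂ (Matrix k k ℂ)))

end Aux

theorem stmt7 {n m l : ℕ} (A : Matrix (Fin n) (Fin n) ℝ) (B : Matrix (Fin m) (Fin n) ℝ)
    (C : Matrix (Fin l) (Fin m) ℝ) (hA : A.PosDef) (hB : B.rank = m) (hC : C.rank = l)
    (S : Matrix (Fin m) (Fin m) ℝ) (hS : S = B * A⁻¹ * Bᵀ)
    (X : Matrix (Fin l) (Fin l) ℝ) (hX : X = C * S⁻¹ * Cᵀ)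
    (𝒜 Q₃p Q₄p : Matrix (Fin n ⊕ (Fin m ⊕ Fin l)) (Fin n ⊕ (Fin m ⊕ Fin l)) ℝ)
    (h𝒜 : 𝒜 = blk3 A Bᵀ 0 B 0 Cᵀ 0 C 0)
    (hQ₃ : Q₃p = blk3 A Bᵀ 0 0 (-S) Cᵀ 0 0 X)
    (hQ₄ : Q₄p = blk3 A Bᵀ 0 B 0 0 0 C X) :
    (∀ μ ∈ spectrum ℂ ((𝒜 * Q₃p⁻¹).map Complex.ofReal), μ = 1) ∧
    (∀ μ ∈ spectrum ℂ ((Q₄p⁻¹ * 𝒜).map Complex.ofReal), μ = 1) ∧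
    (𝒜 * Q₃p⁻¹ - 1) ^ 3 = 0 ∧
    (Q₄p⁻¹ * 𝒜 - 1) ^ 2 = 0 := by
  -- invertibility facts
  have hSpd : S.PosDef := hS ▸ posDef_conj hA.inv B hB
  have hXpd : X.PosDef := hX ▸ posDef_conj hSpd.inv C hC
  have hAd : IsUnit A.det := (Matrix.isUnit_iff_isUnit_det _).mp hA.isUnit
  have hSd : IsUnit S.det := (Matrix.isUnit_iff_isUnit_det _).mp hSpd.isUnit
  have hXd : IsUnit X.det := (Matrix.isUnit_iff_isUnit_det _).mp hXpd.isUnit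
  have hA1 : A * A⁻¹ = 1 := Matrix.mul_nonsing_inv _ hAd
  have hA2 : A⁻¹ * A = 1 := Matrix.nonsing_inv_mul _ hAd
  have hS1 : S * S⁻¹ = 1 := Matrix.mul_nonsing_inv _ hSd
  have hS2 : S⁻¹ * S = 1 := Matrix.nonsing_inv_mul _ hSd
  have hX1 : X * X⁻¹ = 1 := Matrix.mul_nonsing_inv _ hXd
  have hX2 : X⁻¹ * X = 1 := Matrix.nonsing_inv_mul _ hXd
  -- cancellation lemmas
  have cA : ∀ {k : Type} (Z : Matrix (Fin n) k ℝ), A * (A⁻¹ * Z) = Z := fun Z => by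
    rw [← Matrix.mul_assoc, hA1, Matrix.one_mul]
  have cA' : ∀ {k : Type} (Z : Matrix (Fin n) k ℝ), A⁻¹ * (A * Z) = Z := fun Z => by
    rw [← Matrix.mul_assoc, hA2, Matrix.one_mul]
  have cS : ∀ {k : Type} (Z : Matrix (Fin m) k ℝ), S * (S⁻¹ * Z) = Z := fun Z => by
    rw [← Matrix.mul_assoc, hS1, Matrix.one_mul]
  have cS' : ∀ {k : Type} (Z : Matrix (Fin m) k ℝ), S⁻¹ * (S * Z) = Z := fun Z => by
    rw [← Matrix.mul_assoc, hS2, Matrix.one_mul]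
  have cX : ∀ {k : Type} (Z : Matrix (Fin l) k ℝ), X * (X⁻¹ * Z) = Z := fun Z => by
    rw [← Matrix.mul_assoc, hX1, Matrix.one_mul]
  have cBS : ∀ {k : Type} (Z : Matrix (Fin m) k ℝ), B * (A⁻¹ * (Bᵀ * Z)) = S * Z := fun Z => by
    rw [← Matrix.mul_assoc, ← Matrix.mul_assoc, ← hS]
  have cBS' : B * (A⁻¹ * Bᵀ) = S := by rw [← Matrix.mul_assoc, hS]
  have cCX : ∀ {k : Type} (Z : Matrix (Fin l) k ℝ), C * (S⁻¹ * (Cᵀ * Z)) = X * Z := fun Z => by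
    rw [← Matrix.mul_assoc, ← Matrix.mul_assoc, ← hX]
  have cCX' : C * (S⁻¹ * Cᵀ) = X := by rw [← Matrix.mul_assoc, hX]
  -- explicit inverse of Q₃p
  have hQ₃inv : Q₃p⁻¹ = blk3 A⁻¹ (A⁻¹ * (Bᵀ * S⁻¹)) (-(A⁻¹ * (Bᵀ * (S⁻¹ * (Cᵀ * X⁻¹)))))
      0 (-S⁻¹) (S⁻¹ * (Cᵀ * X⁻¹)) 0 0 X⁻¹ := by
    apply Matrix.inv_eq_right_inv
    rw [hQ₃, blk3_mul, ← blk3_one]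
    congr 1 <;>
      simp [Matrix.mul_assoc, Matrix.mul_neg, Matrix.neg_mul, cA, cS, cX, cBS, cBS', hA1, hS1, hX1]
  -- explicit inverse of Q₄p
  have hQ₄inv : Q₄p⁻¹ = blk3 (A⁻¹ - A⁻¹ * (Bᵀ * (S⁻¹ * (B * A⁻¹)))) (A⁻¹ * (Bᵀ * S⁻¹)) 0
      (S⁻¹ * (B * A⁻¹)) (-S⁻¹) 0
      (-(X⁻¹ * (C * (S⁻¹ * (B * A⁻¹))))) (X⁻¹ * (C * S⁻¹)) X⁻¹ := by
    apply Matrix.inv_eq_right_inv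
    rw [hQ₄, blk3_mul, ← blk3_one]
    congr 1 <;>
      simp [Matrix.mul_assoc, Matrix.mul_sub, Matrix.sub_mul, Matrix.mul_neg, Matrix.neg_mul,
        cA, cS, cX, cBS, cBS', cCX, cCX', hA1, hS1, hX1]
  -- the two nilpotency identities
  have hN3 : (𝒜 * Q₃p⁻¹ - 1) ^ 3 = 0 := by
    have hAQ : 𝒜 * Q₃p⁻¹ - 1 = blk3 0 0 0 (B * A⁻¹) 0 0 0 (-(C * S⁻¹)) 0 := by
      rw [h𝒜, hQ₃inv, blk3_mul, ← blk3_one, blk3_sub]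
      congr 1 <;>
        simp [Matrix.mul_assoc, Matrix.mul_neg, Matrix.neg_mul, cA, cS, cX, cBS, cBS', cCX, cCX',
          hA1, hS1, hX1]
    rw [hAQ, pow_succ, pow_two, blk3_mul, blk3_mul, ← blk3_zero]
    congr 1 <;> simp
  have hN4 : (Q₄p⁻¹ * 𝒜 - 1) ^ 2 = 0 := by
    have hQA : Q₄p⁻¹ * 𝒜 - 1 =
        blk3 0 0 (A⁻¹ * (Bᵀ * (S⁻¹ * Cᵀ))) 0 0 (-(S⁻¹ * Cᵀ)) 0 0 0 := by
      rw [h𝒜, hQ₄inv, blk3_mul, ← blk3_one, blk3_sub]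
      congr 1 <;>
        simp [Matrix.mul_assoc, Matrix.mul_sub, Matrix.sub_mul, Matrix.mul_neg, Matrix.neg_mul,
          cA, cA', cS, cS', cX, cBS, cBS', cCX, cCX', hA1, hA2, hS1, hS2, hX1, hX2]
    rw [hQA, pow_two, blk3_mul, ← blk3_zero]
    congr 1 <;> simp
  -- transfer to ℂ
  have hmap : ∀ (M : Matrix (Fin n ⊕ (Fin m ⊕ Fin l)) (Fin n ⊕ (Fin m ⊕ Fin l)) ℝ) (p : ℕ),
      (M - 1) ^ p = 0 → ((M.map Complex.ofReal) - 1) ^ p = 0 := by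
    intro M p h
    have : M.map Complex.ofReal = Complex.ofRealHom.mapMatrix M := rfl
    rw [this, show (1 : Matrix (Fin n ⊕ (Fin m ⊕ Fin l)) (Fin n ⊕ (Fin m ⊕ Fin l)) ℂ) =
        Complex.ofRealHom.mapMatrix 1 from (_root_.map_one _).symm,
      ← map_sub, ← map_pow, h, map_zero]
  refine ⟨nilpotent_spectrum _ 3 (hmap _ 3 hN3), nilpotent_spectrum _ 2 (hmap _ 2 hN4), hN3, hN4⟩
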